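/- For the AdaPBB iteration, the quantities B_k and E_k satisfy: α_k·E_k = θ_k for all k ≥ 1; and, for all k ≥ 0, 2B_{k+1} ≤ α_k²/α_{k+1}² and E_{k+1}·α_{k+1}² ≤ E_k·α_k² + α_k. -/
import Mathlib


open scoped RealInnerProductSpace
open Finset Filter

noncomputable section

/-- The AdaPBB iteration (Algorithm 3 of the paper) in its implicit form, for a composite
objective `F = f + g` where `f : ℝⁿ → ℝ` is convex and differentiable with gradient `f'`,
and `g : ℝⁿ → ℝ` is convex.  `ξ k` is a subgradient of `g` at `x k`. -/
structure AdaPBB (n : ℕ) where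
  f : EuclideanSpace ℝ (Fin n) → ℝ
  g : EuclideanSpace ℝ (Fin n) → ℝ
  f' : EuclideanSpace ℝ (Fin n) → EuclideanSpace ℝ (Fin n)
  x : ℕ → EuclideanSpace ℝ (Fin n)
  ξ : ℕ → EuclideanSpace ℝ (Fin n)
  α : ℕ → ℝ
  θ : ℕ → ℝ
  lam : ℕ → ℝ
  hfconv : ConvexOn ℝ Set.univ f
  hgconv : ConvexOn ℝ Set.univ g
  hgrad : ∀ y, HasGradientAt f (f' y) y
  hmin : ∃ z, ∀ y, f z + g z ≤ f y + g y
  hα0 : 0 < α 0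
  hθ0 : 0 ≤ θ 0
  hsub : ∀ k, ∀ y, g (x k) + ⟪ξ k, y - x k⟫ ≤ g y
  hstep : ∀ k, x (k + 1) = x k - α k • (f' (x k) + ξ (k + 1))
  hne : ∀ k, f' (x (k + 1)) ≠ f' (x k)
  hlam : ∀ k, lam (k + 1) =
    ⟪f' (x (k + 1)) - f' (x k), x (k + 1) - x k⟫ / ‖f' (x (k + 1)) - f' (x k)‖ ^ 2
  hlampos : ∀ k, 0 < lam (k + 1)
  hcase1 : ∀ k, α k ≤ lam (k + 1) →
    α (k + 1) = Real.sqrt (1 + θ k) * α k ∧ θ (k + 1) = α (k + 1) / α k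
  hcase2 : ∀ k, α k / 2 < lam (k + 1) → lam (k + 1) < α k →
    α (k + 1) = α k / Real.sqrt 2 ∧ θ (k + 1) = 0
  hcase3 : ∀ k, lam (k + 1) ≤ α k / 2 →
    α (k + 1) = lam (k + 1) / Real.sqrt 2 ∧ θ (k + 1) = 0

namespace AdaPBB

variable {n : ℕ}

/-- The composite objective `F = f + g`. -/
def F (S : AdaPBB n) (y : EuclideanSpace ℝ (Fin n)) : ℝ := S.f y + S.g y

/-- `B_k` (for `k ≥ 1`), as in (5.13). -/
def B (S : AdaPBB n) (k : ℕ) : ℝ :=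
  if S.α (k - 1) ≤ S.lam k then 0
  else if S.α (k - 1) / 2 < S.lam k then 1
  else (S.α (k - 1) - S.lam k) ^ 2 / S.lam k ^ 2

/-- `E_k` for `k ≥ 1`, as in (5.13). -/
def Eaux (S : AdaPBB n) (k : ℕ) : ℝ :=
  if S.α (k - 1) ≤ S.lam k then 1 / S.α (k - 1) else 0

/-- `E_k`, with the convention `E_0 = (E_1·α_1² - α_0)/α_0²`. -/
def E (S : AdaPBB n) (k : ℕ) : ℝ :=
  if k = 0 then (S.Eaux 1 * S.α 1 ^ 2 - S.α 0) / S.α 0 ^ 2 else S.Eaux k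

/-- The energy `V_k` (for `k ≥ 1`), relative to a minimizer `xs` of `F`. -/
def V (S : AdaPBB n) (xs : EuclideanSpace ℝ (Fin n)) (k : ℕ) : ℝ :=
  ‖S.x k - xs‖ ^ 2 + 2 * S.B k * S.α k ^ 2 * ‖S.f' (S.x (k - 1)) + S.ξ (k - 1)‖ ^ 2 +
    2 * S.α (k - 1) * (1 + S.E (k - 1) * S.α (k - 1)) * (S.F (S.x (k - 1)) - S.F xs)

/-- The energy `U_k` (for `k ≥ 1`), relative to a minimizer `xs` of `F`. -/
def U (S : AdaPBB n) (xs : EuclideanSpace ℝ (Fin n)) (k : ℕ) : ℝ :=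
  ‖S.x k - xs‖ ^ 2 + 2 * S.B k * S.α k ^ 2 * ‖S.f' (S.x (k - 1)) + S.ξ (k - 1)‖ ^ 2 +
    2 * S.E k * S.α k ^ 2 * (S.F (S.x (k - 1)) - S.F xs)

end AdaPBB

end

private lemma adapbb_alpha_pos {n : ℕ} (S : AdaPBB n) :
    ∀ k, 0 < S.α k ∧ 0 ≤ S.θ k := by
  intro k
  induction k with
  | zero => exact ⟨S.hα0, S.hθ0⟩
  | succ m ih =>
    obtain ⟨hαm, hθm⟩ := ih
    by_cases h1 : S.α m ≤ S.lam (m + 1)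
    · obtain ⟨ha, hθ⟩ := S.hcase1 m h1
      have hs : 0 < Real.sqrt (1 + S.θ m) := Real.sqrt_pos.2 (by linarith)
      have hpos : 0 < S.α (m + 1) := by rw [ha]; exact mul_pos hs hαm
      exact ⟨hpos, by rw [hθ]; positivity⟩
    · push_neg at h1
      by_cases h2 : S.α m / 2 < S.lam (m + 1)
      · obtain ⟨ha, hθ⟩ := S.hcase2 m h2 h1
        refine ⟨?_, by rw [hθ]⟩
        rw [ha]
        have : (0:ℝ) < Real.sqrt 2 := by positivity
        positivity
      · push_neg at h2
        obtain ⟨ha, hθ⟩ := S.hcase3 m h2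
        have hl := S.hlampos m
        refine ⟨?_, by rw [hθ]⟩
        rw [ha]
        have : (0:ℝ) < Real.sqrt 2 := by positivity
        positivity

private lemma adapbb_Eaux_nonneg {n : ℕ} (S : AdaPBB n) (k : ℕ) :
    0 ≤ S.Eaux k := by
  unfold AdaPBB.Eaux
  split
  · have := (adapbb_alpha_pos S (k - 1)).1
    positivity
  · exact le_rfl

/-- Lemma 5.6: for the AdaPBB iteration, `α_k·E_k = θ_k` for all `k ≥ 1`; and for all
`k ≥ 0`, `2·B_{k+1} ≤ α_k²/α_{k+1}²` and `E_{k+1}·α_{k+1}² ≤ E_k·α_k² + α_k`. -/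
theorem adapbb_BE_properties (n : ℕ) (S : AdaPBB n) :
    (∀ k, 1 ≤ k → S.α k * S.E k = S.θ k) ∧
    (∀ k, 2 * S.B (k + 1) ≤ S.α k ^ 2 / S.α (k + 1) ^ 2 ∧
      S.E (k + 1) * S.α (k + 1) ^ 2 ≤ S.E k * S.α k ^ 2 + S.α k) := by
  have hpos : ∀ k, 0 < S.α k := fun k => (adapbb_alpha_pos S k).1
  have hθnn : ∀ k, 0 ≤ S.θ k := fun k => (adapbb_alpha_pos S k).2
  have key : ∀ m : ℕ, S.α (m + 1) * S.E (m + 1) = S.θ (m + 1) := by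
    intro m
    have hαm := hpos m
    simp only [AdaPBB.E, Nat.succ_ne_zero, if_false, AdaPBB.Eaux, Nat.succ_sub_one]
    by_cases h1 : S.α m ≤ S.lam (m + 1)
    · obtain ⟨ha, hθ⟩ := S.hcase1 m h1
      rw [if_pos h1, hθ, mul_one_div]
    · push_neg at h1
      rw [if_neg (not_le.2 h1)]
      by_cases h2 : S.α m / 2 < S.lam (m + 1)
      · rw [(S.hcase2 m h2 h1).2]; ring
      · push_neg at h2
        rw [(S.hcase3 m h2).2]; ring
  constructor
  · intro k hk
    obtain ⟨m, rfl⟩ := Nat.exists_eq_add_of_le hk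
    rw [add_comm]
    exact key m
  · intro k
    constructor
    · -- 2 * B (k+1) ≤ α k ^ 2 / α (k+1) ^ 2
      have hαk := hpos k
      have hαk1 := hpos (k + 1)
      simp only [AdaPBB.B, Nat.succ_sub_one]
      by_cases h1 : S.α k ≤ S.lam (k + 1)
      · rw [if_pos h1]
        have : (0:ℝ) ≤ S.α k ^ 2 / S.α (k + 1) ^ 2 := by positivity
        linarith
      · push_neg at h1
        rw [if_neg (not_le.2 h1)]
        by_cases h2 : S.α k / 2 < S.lam (k + 1)
        · rw [if_pos h2]
          obtain ⟨ha, -⟩ := S.hcase2 k h2 h1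
          have h2' : Real.sqrt 2 ^ 2 = 2 := Real.sq_sqrt (by norm_num)
          have : S.α k ^ 2 / S.α (k + 1) ^ 2 = 2 := by
            rw [ha, div_pow, h2']
            field_simp
          rw [this]
          norm_num
        · push_neg at h2
          rw [if_neg (not_lt.2 h2)]
          obtain ⟨ha, -⟩ := S.hcase3 k h2
          have hl := S.hlampos k
          have h2' : Real.sqrt 2 ^ 2 = 2 := Real.sq_sqrt (by norm_num)
          have hrhs : S.α k ^ 2 / S.α (k + 1) ^ 2 = 2 * S.α k ^ 2 / S.lam (k + 1) ^ 2 := by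
            rw [ha, div_pow, h2']
            rw [div_div_eq_mul_div]
            ring
          rw [hrhs, show (2:ℝ) * ((S.α k - S.lam (k + 1)) ^ 2 / S.lam (k + 1) ^ 2)
              = 2 * (S.α k - S.lam (k + 1)) ^ 2 / S.lam (k + 1) ^ 2 from by ring]
          apply div_le_div_of_nonneg_right ?_ (by positivity)
          nlinarith [hl, h2, hαk]
    · -- E (k+1) * α (k+1)^2 ≤ E k * α k ^ 2 + α k
      have hαk := hpos k
      cases k with
      | zero =>
        have h0 := hpos 0
        simp only [AdaPBB.E, Nat.succ_ne_zero, if_false, if_true, zero_add, if_pos rfl]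
        have : (S.Eaux 1 * S.α 1 ^ 2 - S.α 0) / S.α 0 ^ 2 * S.α 0 ^ 2
            = S.Eaux 1 * S.α 1 ^ 2 - S.α 0 := by
          field_simp
        rw [this]
        linarith
      | succ m =>
        have hαm1 := hpos (m + 1)
        have hk := key m
        have hEnn : 0 ≤ S.E (m + 1) := by
          simp only [AdaPBB.E, Nat.succ_ne_zero, if_false]
          exact adapbb_Eaux_nonneg S (m + 1)
        by_cases h1 : S.α (m + 1) ≤ S.lam (m + 2)
        · obtain ⟨ha, hθ⟩ := S.hcase1 (m + 1) h1
          have hE2 : S.E (m + 2) = 1 / S.α (m + 1) := by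
            simp only [AdaPBB.E, Nat.succ_ne_zero, if_false, AdaPBB.Eaux,
              Nat.succ_sub_one, if_pos h1]
          have hsq : S.α (m + 2) ^ 2 = (1 + S.θ (m + 1)) * S.α (m + 1) ^ 2 := by
            rw [ha, mul_pow, Real.sq_sqrt (by linarith [hθnn (m + 1)])]
          rw [hE2, hsq]
          apply le_of_eq
          have h1θ : S.θ (m + 1) = S.α (m + 1) * S.E (m + 1) := (key m).symm
          field_simp
          rw [h1θ]
          ring
        · have hE2 : S.E (m + 2) = 0 := by
            simp only [AdaPBB.E, Nat.succ_ne_zero, if_false, AdaPBB.Eaux,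
              Nat.succ_sub_one, if_neg h1]
          rw [hE2, zero_mul]
          have : 0 ≤ S.E (m + 1) * S.α (m + 1) ^ 2 := by positivity
          linarith
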